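/- Let f : [a,b] → ℝ be a convex function on [a,b] with finite one-sided derivatives f′₊(a) and f′₋(b). Then 0 ≤ (f(a) + f(b))/2 − (1/(b−a))·∫_a^b f(t) dt ≤ (1/8)·[ f′₋(b) − f′₊(a) ]·(b−a). -/

import Mathlib

open MeasureTheory Set intervalIntegral

private lemma hh_integral_affine (p q a b : ℝ) :
    ∫ t in a..b, (p + q * t) = p * (b - a) + q * (b ^ 2 - a ^ 2) / 2 := by
  rw [intervalIntegral.integral_add intervalIntegrable_const
    ((by fun_prop : Continuous fun t : ℝ => q * t).intervalIntegrable a b)]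
  rw [intervalIntegral.integral_const_mul, integral_id, intervalIntegral.integral_const]
  simp only [smul_eq_mul]
  ring

private lemma hh_contOn {a b : ℝ} (hab : a < b) {f : ℝ → ℝ}
    (hf : ConvexOn ℝ (Set.Icc a b) f) {A B : ℝ}
    (hA : HasDerivWithinAt f A (Set.Ici a) a)
    (hB : HasDerivWithinAt f B (Set.Iic b) b) :
    ContinuousOn f (Set.Icc a b) := by
  have hIoo : ContinuousOn f (Set.Ioo a b) :=
    (hf.subset Set.Ioo_subset_Icc_self (convex_Ioo a b)).continuousOn isOpen_Ioo
  intro x hx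
  rcases eq_or_lt_of_le hx.1 with rfl | hax
  · exact hA.continuousWithinAt.mono Set.Icc_subset_Ici_self
  rcases eq_or_lt_of_le hx.2 with rfl | hxb
  · exact hB.continuousWithinAt.mono Set.Icc_subset_Iic_self
  exact (hIoo.continuousAt (Ioo_mem_nhds hax hxb)).continuousWithinAt

/-- **Counterpart of the Hermite–Hadamard inequality** (Corollary 3): for a
convex `f : [a,b] → ℝ` with finite right derivative `A` at `a` and finite left
derivative `B` at `b`,
`0 ≤ (f(a)+f(b))/2 − (1/(b−a))∫_a^b f ≤ (1/8)[f′₋(b) − f′₊(a)](b−a)`. -/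
theorem hermite_hadamard_difference_upper_bound
    (a b : ℝ) (hab : a < b) (f : ℝ → ℝ)
    (hf : ConvexOn ℝ (Set.Icc a b) f) (A B : ℝ)
    (hA : HasDerivWithinAt f A (Set.Ici a) a)
    (hB : HasDerivWithinAt f B (Set.Iic b) b) :
    0 ≤ (f a + f b) / 2 - (1 / (b - a)) * ∫ t in a..b, f t ∧
      (f a + f b) / 2 - (1 / (b - a)) * (∫ t in a..b, f t) ≤
        (1 / 8) * (B - A) * (b - a) := by
  have hba : (0:ℝ) < b - a := by linarith
  have hbane : b - a ≠ 0 := ne_of_gt hba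
  have hcont : ContinuousOn f (Set.Icc a b) := hh_contOn hab hf hA hB
  have huIcc : Set.uIcc a b = Set.Icc a b := Set.uIcc_of_le hab.le
  have hInt : IntervalIntegrable f volume a b :=
    ContinuousOn.intervalIntegrable (huIcc ▸ hcont)
  set m : ℝ := (a + b) / 2 with hm
  have ham : a ≤ m := by rw [hm]; linarith
  have hmb : m ≤ b := by rw [hm]; linarith
  have haMem : a ∈ Set.Icc a b := ⟨le_refl a, hab.le⟩
  have hbMem : b ∈ Set.Icc a b := ⟨hab.le, le_refl b⟩
  have hA' : HasDerivWithinAt f A (Set.Icc a b) a := hA.mono Set.Icc_subset_Ici_self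
  have hB' : HasDerivWithinAt f B (Set.Icc a b) b := hB.mono Set.Icc_subset_Iic_self
  -- tangent line at a : f t ≥ f a + A * (t - a) on [a,b]
  have htanA : ∀ t ∈ Set.Icc a b, f a + A * (t - a) ≤ f t := by
    intro t ht
    rcases eq_or_lt_of_le ht.1 with rfl | hat
    · simp
    have hs := hf.le_slope_of_hasDerivWithinAt haMem ht hat hA'
    rw [slope_def_field] at hs
    have h' : A * (t - a) ≤ (f t - f a) / (t - a) * (t - a) :=
      mul_le_mul_of_nonneg_right hs (by linarith)
    rw [div_mul_cancel₀ _ (by linarith : t - a ≠ 0)] at h'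
    linarith
  -- tangent line at b : f t ≥ f b + B * (t - b) on [a,b]
  have htanB : ∀ t ∈ Set.Icc a b, f b + B * (t - b) ≤ f t := by
    intro t ht
    rcases eq_or_lt_of_le ht.2 with rfl | htb
    · simp
    have hs := hf.slope_le_of_hasDerivWithinAt ht hbMem htb hB'
    rw [slope_def_field] at hs
    have h' : (f b - f t) / (b - t) * (b - t) ≤ B * (b - t) :=
      mul_le_mul_of_nonneg_right hs (by linarith)
    rw [div_mul_cancel₀ _ (by linarith : b - t ≠ 0)] at h'
    nlinarith
  -- chord bound : f t ≤ affine interpolation on [a,b]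
  have hchord : ∀ t ∈ Set.Icc a b,
      f t ≤ (f a - (f b - f a) / (b - a) * a) + (f b - f a) / (b - a) * t := by
    intro t ht
    have h1 : (0:ℝ) ≤ (b - t) / (b - a) := by
      apply div_nonneg <;> linarith [ht.2]
    have h2 : (0:ℝ) ≤ (t - a) / (b - a) := by
      apply div_nonneg <;> linarith [ht.1]
    have h3 : (b - t) / (b - a) + (t - a) / (b - a) = 1 := by
      field_simp
      ring
    have hc := hf.2 haMem hbMem h1 h2 h3
    have harg : (b - t) / (b - a) * a + (t - a) / (b - a) * b = t := by
      field_simp; ring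
    simp only [smul_eq_mul] at hc
    rw [harg] at hc
    have hrhs : (b - t) / (b - a) * f a + (t - a) / (b - a) * f b
        = (f a - (f b - f a) / (b - a) * a) + (f b - f a) / (b - a) * t := by
      field_simp
      ring
    linarith [hrhs ▸ hc]
  -- ∫ f ≤ (f a + f b)/2 * (b - a)
  have hupper : ∫ t in a..b, f t ≤ (f a + f b) / 2 * (b - a) := by
    have hmono := intervalIntegral.integral_mono_on hab.le hInt
      ((by fun_prop : Continuous fun t : ℝ =>
        (f a - (f b - f a) / (b - a) * a) + (f b - f a) / (b - a) * t).intervalIntegrable a b)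
      hchord
    rw [hh_integral_affine] at hmono
    have key : (f a - (f b - f a) / (b - a) * a) * (b - a) +
        (f b - f a) / (b - a) * (b ^ 2 - a ^ 2) / 2 = (f a + f b) / 2 * (b - a) := by
      field_simp
      ring
    linarith [hmono, key]
  -- integrability on subintervals
  have hsub1 : Set.uIcc a m ⊆ Set.uIcc a b := by
    rw [Set.uIcc_of_le ham, huIcc]; exact Set.Icc_subset_Icc le_rfl hmb
  have hsub2 : Set.uIcc m b ⊆ Set.uIcc a b := by
    rw [Set.uIcc_of_le hmb, huIcc]; exact Set.Icc_subset_Icc ham le_rfl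
  have hInt1 : IntervalIntegrable f volume a m := hInt.mono_set hsub1
  have hInt2 : IntervalIntegrable f volume m b := hInt.mono_set hsub2
  -- lower bound pieces via tangent lines
  have hlow1 : (f a - A * a) * (m - a) + A * (m ^ 2 - a ^ 2) / 2 ≤ ∫ t in a..m, f t := by
    have hmono := intervalIntegral.integral_mono_on ham
      ((by fun_prop : Continuous fun t : ℝ => (f a - A * a) + A * t).intervalIntegrable a m)
      hInt1 (fun t ht => by
        have h := htanA t ⟨ht.1, le_trans ht.2 hmb⟩
        linarith)
    rwa [hh_integral_affine] at hmono
  have hlow2 : (f b - B * b) * (b - m) + B * (b ^ 2 - m ^ 2) / 2 ≤ ∫ t in m..b, f t := by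
    have hmono := intervalIntegral.integral_mono_on hmb
      ((by fun_prop : Continuous fun t : ℝ => (f b - B * b) + B * t).intervalIntegrable m b)
      hInt2 (fun t ht => by
        have h := htanB t ⟨le_trans ham ht.1, ht.2⟩
        linarith)
    rwa [hh_integral_affine] at hmono
  have hsplit : (∫ t in a..m, f t) + ∫ t in m..b, f t = ∫ t in a..b, f t :=
    intervalIntegral.integral_add_adjacent_intervals hInt1 hInt2
  have hlower : (f a + f b) / 2 * (b - a) + (A - B) * (b - a) ^ 2 / 8 ≤ ∫ t in a..b, f t := by
    rw [← hsplit]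
    have e1 : (f a - A * a) * (m - a) + A * (m ^ 2 - a ^ 2) / 2
        = f a * ((b - a) / 2) + A * (b - a) ^ 2 / 8 := by rw [hm]; ring
    have e2 : (f b - B * b) * (b - m) + B * (b ^ 2 - m ^ 2) / 2
        = f b * ((b - a) / 2) - B * (b - a) ^ 2 / 8 := by rw [hm]; ring
    nlinarith [hlow1, hlow2]
  constructor
  · rw [sub_nonneg, one_div, inv_mul_le_iff₀ hba]
    linarith
  · have h1 : (f a + f b) / 2 + (A - B) * (b - a) / 8 ≤ (1 / (b - a)) * ∫ t in a..b, f t := by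
      rw [one_div, le_inv_mul_iff₀ hba]
      nlinarith [hlower]
    nlinarith [h1]
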